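/- Mixing identity for the auxiliary chain (Lemma EC.3): for all 0 ≤ k < ℓ ≤ K and all p,q ∈ {1,…,T}, (P^{k+1}⋯P^ℓ)(p,q) − V^ℓ(q) = (1−ε)^{ℓ−k} · [ (Q^{k+1}⋯Q^ℓ)(p,q) − V^ℓ(q) ]. (In probabilistic terms: P(D^ℓ=q | D^k=p) − P(D^ℓ=q) = (1−ε)^{ℓ−k}[P(Y^ℓ=q | Y^k=p) − P(D^ℓ=q)], where Y is the auxiliary Markov chain with transition matrices Q^k.) -/

import Mathlib

open Finset

/-- Mixing identity for the auxiliary chain: with row-stochastic matrices `P¹,…,P^K` whose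
entries are all at least `ε`, marginals `V^k = μ P¹⋯P^k` and the auxiliary transition matrices
`Q^k(p,q) = (P^k(p,q) − ε V^k(q))/(1−ε)`, for all `0 ≤ k < ℓ ≤ K` and all states `p, q`,
`(P^{k+1}⋯P^ℓ)(p,q) − V^ℓ(q) = (1−ε)^{ℓ−k} ((Q^{k+1}⋯Q^ℓ)(p,q) − V^ℓ(q))`. -/
theorem auxiliary_chain_mixing_identity
    (T K : ℕ) (hT : 1 ≤ T) (hK : 1 ≤ K)
    (ε : ℝ) (hε0 : 0 < ε) (hε1 : ε < 1)
    (P : ℕ → Matrix (Fin T) (Fin T) ℝ)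
    (hPnn : ∀ k ∈ Finset.Icc 1 K, ∀ p q : Fin T, 0 ≤ P k p q)
    (hProw : ∀ k ∈ Finset.Icc 1 K, ∀ p : Fin T, ∑ q, P k p q = 1)
    (hPent : ∀ k ∈ Finset.Icc 1 K, ∀ p q : Fin T, ε ≤ P k p q)
    (μ : Fin T → ℝ) (hμ0 : ∀ q, 0 ≤ μ q) (hμ1 : ∑ q, μ q = 1)
    (V : ℕ → Fin T → ℝ)
    (hV : ∀ k, V k = Matrix.vecMul μ (((List.range' 1 k).map P).prod))
    (Q : ℕ → Matrix (Fin T) (Fin T) ℝ)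
    (hQ : ∀ k p q, Q k p q = (P k p q - ε * V k q) / (1 - ε)) :
    ∀ k l : ℕ, k < l → l ≤ K → ∀ p q : Fin T,
      (((List.range' (k + 1) (l - k)).map P).prod p q - V l q) =
        (1 - ε) ^ (l - k) *
          (((List.range' (k + 1) (l - k)).map Q).prod p q - V l q) := by
  have hε : (1 : ℝ) - ε ≠ 0 := by linarith
  -- row sums of products of P's
  have hrowP : ∀ n k, k + n ≤ K → ∀ p : Fin T,
      ∑ q, (((List.range' (k+1) n).map P).prod) p q = 1 := by
    intro n
    induction n with
    | zero =>
      intro k hk p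
      simp [Matrix.one_apply]
    | succ n ih =>
      intro k hk p
      rw [List.range'_succ, List.map_cons, List.prod_cons]
      have : ∀ q, (P (k+1) * ((List.range' (k+1+1) n).map P).prod) p q
          = ∑ r, P (k+1) p r * ((List.range' (k+1+1) n).map P).prod r q := by
        intro q; rw [Matrix.mul_apply]
      simp only [this]
      rw [Finset.sum_comm]
      have : ∀ r : Fin T, ∑ q, P (k+1) p r * ((List.range' (k+1+1) n).map P).prod r q
          = P (k+1) p r := by
        intro r
        rw [← Finset.mul_sum, ih (k+1) (by omega) r, mul_one]
      simp only [this]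
      exact hProw (k+1) (Finset.mem_Icc.2 ⟨by omega, by omega⟩) p
  -- the recursion for V
  have hVrec : ∀ n q, V (n+1) q = ∑ r, V n r * P (n+1) r q := by
    intro n q
    have h1 : List.range' 1 (n+1) = List.range' 1 n ++ [n+1] := by
      rw [List.range'_concat]; norm_num [Nat.add_comm]
    rw [hV, hV, h1, List.map_append, List.prod_append, List.map_singleton,
      List.prod_singleton, ← Matrix.vecMul_vecMul]
    simp [Matrix.vecMul, dotProduct]
  -- V n sums to 1
  have hVsum : ∀ n, n ≤ K → ∑ q, V n q = 1 := by
    intro n hn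
    have : ∀ q, V n q = ∑ r, μ r * (((List.range' 1 n).map P).prod) r q := by
      intro q; rw [hV]; simp [Matrix.vecMul, dotProduct]
    simp only [this]
    rw [Finset.sum_comm]
    have : ∀ r : Fin T, ∑ q, μ r * (((List.range' 1 n).map P).prod) r q = μ r := by
      intro r
      rw [← Finset.mul_sum, hrowP n 0 (by omega) r, mul_one]
    simp only [this, hμ1]
  -- V n · Q (n+1) = V (n+1)
  have hVQ : ∀ n, n + 1 ≤ K → ∀ q, ∑ r, V n r * Q (n+1) r q = V (n+1) q := by
    intro n hn q
    have : ∀ r : Fin T, V n r * Q (n+1) r q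
        = (V n r * P (n+1) r q - (ε * V (n+1) q) * V n r) / (1 - ε) := by
      intro r; rw [hQ]; ring
    simp only [this]
    rw [← Finset.sum_div, Finset.sum_sub_distrib, ← hVrec, ← Finset.mul_sum,
      hVsum n (by omega), mul_one]
    field_simp
  -- the main induction
  have main : ∀ n k, k + n ≤ K → ∀ p q : Fin T,
      (((List.range' (k+1) n).map P).prod p q - V (k+n) q) =
        (1 - ε) ^ n * (((List.range' (k+1) n).map Q).prod p q - V (k+n) q) := by
    intro n
    induction n with
    | zero => intro k hk p q; simp
    | succ n ih =>
      intro k hk p q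
      have hrng : List.range' (k+1) (n+1) = List.range' (k+1) n ++ [k+1+n] := by
        rw [List.range'_concat]; norm_num
      set M := ((List.range' (k+1) n).map P).prod with hM
      set N := ((List.range' (k+1) n).map Q).prod with hN
      have hMN : ∀ r : Fin T, M p r
          = (1-ε)^n * N p r + (1 - (1-ε)^n) * V (k+n) r := by
        intro r
        have := ih k (by omega) p r
        linarith [this]
      have hPQ : ∀ r : Fin T, P (k+1+n) r q
          = (1-ε) * Q (k+1+n) r q + ε * V (k+1+n) q := by
        intro r
        rw [hQ]
        field_simp
        ring
      have hMrow : ∑ r, N p r = 1 := by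
        -- row sums of products of Q's
        have hrowQ : ∀ m j, 1 ≤ j → j + m ≤ K + 1 → ∀ p : Fin T,
            ∑ q, (((List.range' j m).map Q).prod) p q = 1 := by
          intro m
          induction m with
          | zero => intro j h1 h2 p; simp [Matrix.one_apply]
          | succ m ihm =>
            intro j h1 h2 p
            rw [List.range'_succ, List.map_cons, List.prod_cons]
            have : ∀ q, (Q j * ((List.range' (j+1) m).map Q).prod) p q
                = ∑ r, Q j p r * ((List.range' (j+1) m).map Q).prod r q := by
              intro q; rw [Matrix.mul_apply]
            simp only [this]
            rw [Finset.sum_comm]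
            have h3 : ∀ r : Fin T, ∑ q, Q j p r * ((List.range' (j+1) m).map Q).prod r q
                = Q j p r := by
              intro r
              rw [← Finset.mul_sum, ihm (j+1) (by omega) (by omega) r, mul_one]
            simp only [h3]
            have : ∀ r : Fin T, Q j p r = (P j p r - ε * V j r) / (1 - ε) := fun r => hQ j p r
            simp only [this]
            rw [← Finset.sum_div, Finset.sum_sub_distrib, ← Finset.mul_sum,
              hProw j (Finset.mem_Icc.2 ⟨h1, by omega⟩) p, hVsum j (by omega)]
            field_simp
        exact hrowQ n (k+1) (by omega) (by omega) p
      have hVrow : ∑ r, V (k+n) r = 1 := hVsum (k+n) (by omega)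
      have hVQn : ∑ r, V (k+n) r * Q (k+n+1) r q = V (k+n+1) q :=
        hVQ (k+n) (by omega) q
      have hprod : ((List.range' (k+1) (n+1)).map P).prod p q
          = ∑ r, M p r * P (k+1+n) r q := by
        rw [hrng, List.map_append, List.prod_append, List.map_singleton,
          List.prod_singleton, ← hM, Matrix.mul_apply]
      have hprodQ : ((List.range' (k+1) (n+1)).map Q).prod p q
          = ∑ r, N p r * Q (k+1+n) r q := by
        rw [hrng, List.map_append, List.prod_append, List.map_singleton,
          List.prod_singleton, ← hN, Matrix.mul_apply]
      have key : ∑ r, M p r * P (k+1+n) r q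
          = (1-ε)^n * (1-ε) * (∑ r, N p r * Q (k+1+n) r q)
            + (1-ε)^n * (ε * V (k+1+n) q) * (∑ r, N p r)
            + (1 - (1-ε)^n) * (1-ε) * (∑ r, V (k+n) r * Q (k+1+n) r q)
            + (1 - (1-ε)^n) * (ε * V (k+1+n) q) * (∑ r, V (k+n) r) := by
        rw [Finset.mul_sum, Finset.mul_sum, Finset.mul_sum, Finset.mul_sum,
          ← Finset.sum_add_distrib, ← Finset.sum_add_distrib, ← Finset.sum_add_distrib]
        apply Finset.sum_congr rfl
        intro r _
        rw [hMN r, hPQ r]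
        ring
      have heq1 : k + 1 + n = k + n + 1 := by omega
      have heq2 : k + (n+1) = k + n + 1 := by omega
      rw [heq2, hprod, hprodQ, key, hMrow, hVrow]
      rw [heq1] at *
      rw [hVQn]
      ring
  intro k l hkl hlK p q
  have := main (l - k) k (by omega) p q
  rwa [show k + (l - k) = l by omega] at this
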